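/- Let S ∈ Ω_{j−1} be normalized and let X, X′ ∈ e(S) with underline(X) = U_{j−1} ∪ {p} and underline(X′) = U_{j−1} ∪ {p′}, where p, p′ lie in the Aut(U_{j−1})-orbit of u_j. Then X and X′ lie in the same Aut(S)-orbit of partial assignments if and only if p and p′ lie in the same Aut(S)-orbit of U and X(p) = X′(p′). -/

import Mathlib

/-!
We model the setting of the paper: `U` and `R` are finite sets, `Γ` is a
subgroup of `Sym(U)` (here `Equiv.Perm U`).  A partial assignment `X : W → R`
with `W ⊆ U` is modeled as a function `U → Option R` whose domain
(`underline X`) is the set of points where it is `some`.  The paper's right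
action is rendered as the corresponding (mirror) left action:
`(γ • X)(u) = X(γ⁻¹ u)`, points are acted on by `u ↦ γ u` and sets by images.
-/

namespace PrefixAssignment

variable {U R : Type*}

/-- The domain `underline X` of a partial assignment. -/
def dom (X : U → Option R) : Set U := {u | X u ≠ none}

/-- The action of a permutation `γ` on a partial assignment:
`(psmul γ X)(u) = X(γ⁻¹ u)` (left-action form of the paper's
`X^γ(u) = X(u^{γ⁻¹})`). -/
def psmul (γ : Equiv.Perm U) (X : U → Option R) : U → Option R :=
  fun u => X (γ⁻¹ u)

open scoped Classical in
/-- Restriction of a partial assignment to a set `W` of variables. -/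
noncomputable def restrict (X : U → Option R) (W : Set U) : U → Option R :=
  fun u => if u ∈ W then X u else none

/-- `Uset u j = U_j = {u_1, …, u_j}` (`u` is 0-indexed). -/
def Uset {k : ℕ} (u : Fin k → U) (j : ℕ) : Set U :=
  {x | ∃ i : Fin k, (i : ℕ) < j ∧ u i = x}

/-- `Ω_j`: partial assignments whose domain lies in the `Γ`-orbit of `U_j`. -/
def OmegaJ (Γ : Subgroup (Equiv.Perm U)) {k : ℕ} (u : Fin k → U) (j : ℕ)
    (X : U → Option R) : Prop :=
  ∃ γ ∈ Γ, ⇑γ '' dom X = Uset u j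

/-- The extension relation `e ⊆ Ω_j × Ω_{j-1}`:  `erel Γ u j X S` holds iff
there is `γ ∈ Γ` taking the domain of `X` to `U_j`, the domain of `S` to
`U_{j-1}`, and the restriction of `γ • X` to `U_{j-1}` to `γ • S`. -/
def erel (Γ : Subgroup (Equiv.Perm U)) {k : ℕ} (u : Fin k → U) (j : ℕ)
    (X S : U → Option R) : Prop :=
  ∃ γ ∈ Γ, ⇑γ '' dom X = Uset u j ∧ ⇑γ '' dom S = Uset u (j - 1) ∧
    restrict (psmul γ X) (Uset u (j - 1)) = psmul γ S

/-- The setwise stabilizer `Aut(W)` of `W ⊆ U` in `Γ`. -/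
def AutSet (Γ : Subgroup (Equiv.Perm U)) (W : Set U) : Set (Equiv.Perm U) :=
  {γ | γ ∈ Γ ∧ ⇑γ '' W = W}

/-- The automorphism group (stabilizer) `Aut(S)` of a partial assignment `S` in `Γ`. -/
def AutAsg (Γ : Subgroup (Equiv.Perm U)) (S : U → Option R) : Set (Equiv.Perm U) :=
  {γ | γ ∈ Γ ∧ psmul γ S = S}

/-- The orbit of a point `p ∈ U` under a set `A` of permutations. -/
def ptOrbit (A : Set (Equiv.Perm U)) (p : U) : Set U :=
  {q | ∃ γ ∈ A, γ p = q}


/-- For a normalized seed `S` and extensions `X, X' ∈ e(S)` with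
`underline X = U_{j-1} ∪ {p}` and `underline X' = U_{j-1} ∪ {p'}`:
`X` and `X'` lie in the same `Aut(S)`-orbit iff `p` and `p'` lie in the same
`Aut(S)`-orbit of `U` and `X(p) = X'(p')`. -/
theorem stmt_13 {U R : Type*} [Finite U] [Finite R]
    (Γ : Subgroup (Equiv.Perm U)) {k : ℕ} (u : Fin k → U)
    (hu : Function.Injective u)
    (j : ℕ) (hj1 : 1 ≤ j) (hjk : j ≤ k)
    (S X X' : U → Option R)
    (hS : OmegaJ Γ u (j - 1) S)
    (hSnorm : dom S = Uset u (j - 1))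
    (p p' : U)
    (hp : p ∈ ptOrbit (AutSet Γ (Uset u (j - 1))) (u ⟨j - 1, by omega⟩))
    (hp' : p' ∈ ptOrbit (AutSet Γ (Uset u (j - 1))) (u ⟨j - 1, by omega⟩))
    (hX : OmegaJ Γ u j X ∧ erel Γ u j X S)
    (hX' : OmegaJ Γ u j X' ∧ erel Γ u j X' S)
    (hdX : dom X = Uset u (j - 1) ∪ {p})
    (hdX' : dom X' = Uset u (j - 1) ∪ {p'}) :
    (∃ γ ∈ AutAsg Γ S, psmul γ X = X') ↔
      ((∃ γ ∈ AutAsg Γ S, γ p = p') ∧ X p = X' p') := by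
  classical
  -- `p, p'` are not in `U_{j-1}`
  have hu0 : u ⟨j - 1, by omega⟩ ∉ Uset u (j - 1) := by
    rintro ⟨i, hi, hiu⟩
    have hieq := hu hiu
    have : (i : ℕ) = j - 1 := by rw [hieq]
    omega
  have notmem : ∀ q : U, q ∈ ptOrbit (AutSet Γ (Uset u (j - 1))) (u ⟨j - 1, by omega⟩) →
      q ∉ Uset u (j - 1) := by
    rintro q ⟨δ, ⟨hδΓ, hδU⟩, rfl⟩ hq
    apply hu0
    rw [← hδU] at hq
    obtain ⟨x, hx, hxq⟩ := hq
    have : x = u ⟨j - 1, by omega⟩ := δ.injective hxq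
    rwa [← this]
  have hpU : p ∉ Uset u (j - 1) := notmem p hp
  have hp'U : p' ∉ Uset u (j - 1) := notmem p' hp'
  -- extensions agree with `S` on `U_{j-1}`
  have agree : ∀ Y : U → Option R, erel Γ u j Y S →
      ∀ w ∈ Uset u (j - 1), Y w = S w := by
    rintro Y ⟨γ₁, hγ₁Γ, h1, h2, h3⟩ w hw
    rw [hSnorm] at h2
    have hv : γ₁ w ∈ Uset u (j - 1) := h2 ▸ ⟨w, hw, rfl⟩
    have h4 := congrFun h3 (γ₁ w)
    simp only [restrict, psmul, if_pos hv] at h4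
    simpa using h4
  have agX : ∀ w ∈ Uset u (j - 1), X w = S w := agree X hX.2
  have agX' : ∀ w ∈ Uset u (j - 1), X' w = S w := agree X' hX'.2
  constructor
  · rintro ⟨γ, ⟨hγΓ, hγS⟩, hγX⟩
    have key : ∀ w, S (γ⁻¹ w) = S w := fun w => congrFun hγS w
    have stab : ∀ w, γ⁻¹ w ∈ Uset u (j - 1) ↔ w ∈ Uset u (j - 1) := by
      intro w
      rw [← hSnorm]
      simp only [dom, Set.mem_setOf_eq, key]
    have hγp : γ p = p' := by
      have hmem : γ p ∈ dom X' := by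
        rw [← hγX]
        show X (γ⁻¹ (γ p)) ≠ none
        rw [← Equiv.Perm.mul_apply, inv_mul_cancel, Equiv.Perm.one_apply]
        show p ∈ dom X
        rw [hdX]; exact Or.inr rfl
      rw [hdX'] at hmem
      rcases hmem with h | h
      · exfalso
        apply hpU
        have := (stab (γ p)).2 h
        simpa using this
      · exact h
    refine ⟨⟨γ, ⟨hγΓ, hγS⟩, hγp⟩, ?_⟩
    have := congrFun hγX p'
    rw [← this]
    simp only [psmul, ← hγp, ← Equiv.Perm.mul_apply, inv_mul_cancel, Equiv.Perm.one_apply]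
  · rintro ⟨⟨γ, ⟨hγΓ, hγS⟩, hγp⟩, hXX'⟩
    refine ⟨γ, ⟨hγΓ, hγS⟩, ?_⟩
    have key : ∀ w, S (γ⁻¹ w) = S w := fun w => congrFun hγS w
    have stab : ∀ w, γ⁻¹ w ∈ Uset u (j - 1) ↔ w ∈ Uset u (j - 1) := by
      intro w
      rw [← hSnorm]
      simp only [dom, Set.mem_setOf_eq, key]
    funext w
    by_cases hw : w ∈ Uset u (j - 1)
    · have h1 : γ⁻¹ w ∈ Uset u (j - 1) := (stab w).2 hw
      calc psmul γ X w = X (γ⁻¹ w) := rfl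
        _ = S (γ⁻¹ w) := agX _ h1
        _ = S w := key w
        _ = X' w := (agX' w hw).symm
    · by_cases hw' : w = p'
      · have hinv : γ⁻¹ p' = p := by rw [← hγp]; simp
        show X (γ⁻¹ w) = X' w
        rw [hw', hinv, hXX']
      · -- w outside dom X' and γ⁻¹ w outside dom X
        have hX'w : X' w = none := by
          by_contra h
          have : w ∈ dom X' := h
          rw [hdX'] at this
          rcases this with h1 | h1
          · exact hw h1
          · exact hw' h1
        have hXw : X (γ⁻¹ w) = none := by
          by_contra h
          have : γ⁻¹ w ∈ dom X := h
          rw [hdX] at this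
          rcases this with h1 | h1
          · exact hw ((stab w).1 h1)
          · apply hw'
            have : w = γ p := by
              rw [← h1]; simp
            rw [this, hγp]
        simp only [psmul, hXw, hX'w]

end PrefixAssignment
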